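/- For |z| < π, z·cot(z) = Σ_{k≥0} B_{2k} (-1)^k 2^{2k} z^{2k} / (2k)!, where B_{2k} are the Bernoulli numbers. -/

import Mathlib

open Complex Finset Real

private lemma bernoulli_odd_zero {m : ℕ} (h : Odd m) (h1 : 1 < m) : bernoulli m = 0 := by
  rw [bernoulli_eq_bernoulli'_of_ne_one (by omega)]
  exact bernoulli'_eq_zero_of_odd h h1

private lemma bernoulli_abs_bound (n : ℕ) :
    |(bernoulli n : ℝ)| / n.factorial ≤ 4 / (2 * π) ^ n := by
  rcases Nat.even_or_odd n with ⟨m, hm⟩ | hodd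
  · rcases eq_or_ne m 0 with rfl | hm0
    · norm_num at hm; subst hm; norm_num
    · have hn : n = 2 * m := by omega
      subst hn
      have hZ := hasSum_zeta_nat hm0
      set S : ℝ := (-1 : ℝ) ^ (m + 1) * 2 ^ (2 * m - 1) * π ^ (2 * m) *
          (bernoulli (2 * m) : ℝ) / (2 * m).factorial with hS
      have hS0 : 0 ≤ S := hZ.nonneg fun i => by positivity
      have hS2 : S ≤ π ^ 2 / 6 := by
        refine hasSum_le (fun i => ?_) hZ hasSum_zeta_two
        rcases Nat.eq_zero_or_pos i with rfl | hi
        · simp [zero_pow, hm0, Nat.mul_ne_zero]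
        · have h1 : (1 : ℝ) ≤ (i : ℝ) := by exact_mod_cast hi
          have := pow_le_pow_right₀ h1 (show 2 ≤ 2 * m by omega)
          exact one_div_le_one_div_of_le (by positivity) this
      have hfac : (0 : ℝ) < (2 * m).factorial := by exact_mod_cast (2 * m).factorial_pos
      have hc : (0 : ℝ) < 2 ^ (2 * m - 1) * π ^ (2 * m) / (2 * m).factorial := by positivity
      have hSB : S = ((-1 : ℝ) ^ (m + 1) * (bernoulli (2 * m) : ℝ)) *
          (2 ^ (2 * m - 1) * π ^ (2 * m) / (2 * m).factorial) := by rw [hS]; ring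
      have h0 : 0 ≤ (-1 : ℝ) ^ (m + 1) * (bernoulli (2 * m) : ℝ) := by
        by_contra h
        push_neg at h
        nlinarith
      have habs : |(bernoulli (2 * m) : ℝ)| = (-1 : ℝ) ^ (m + 1) * (bernoulli (2 * m) : ℝ) := by
        rw [← _root_.abs_of_nonneg h0, _root_.abs_mul, _root_.abs_pow, _root_.abs_neg, _root_.abs_one, one_pow, one_mul]
      have hpow : (2 : ℝ) ^ (2 * m - 1) = 2 ^ (2 * m) / 2 := by
        rw [eq_div_iff (two_ne_zero' ℝ), ← pow_succ]
        congr 1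
        omega
      have key : |(bernoulli (2 * m) : ℝ)| / (2 * m).factorial = 2 * S / (2 * π) ^ (2 * m) := by
        rw [habs, hSB, hpow, mul_pow]
        have hπ : (0 : ℝ) < π := Real.pi_pos
        field_simp
      rw [key]
      have hπ2 : π ^ 2 ≤ 12 := by nlinarith [Real.pi_lt_d2, Real.pi_pos]
      have h24 : 2 * S ≤ 4 := by nlinarith
      have hd : (0:ℝ) < (2 * π) ^ (2 * m) := by positivity
      exact (div_le_div_iff_of_pos_right hd).mpr h24
  · rcases hodd with ⟨k, hk⟩
    rcases eq_or_ne k 0 with rfl | hk0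
    · subst hk
      norm_num [bernoulli_one]
      rw [div_le_div_iff₀ (by norm_num) (by positivity)]
      nlinarith [Real.pi_le_four, Real.pi_pos]
    · have h1 : bernoulli n = 0 := bernoulli_odd_zero ⟨k, hk⟩ (by omega)
      rw [h1]
      simp
      positivity

private lemma bernoulli_egf_hasSum (x : ℂ) (hx : ‖x‖ < 2 * π) (hx0 : x ≠ 0) :
    HasSum (fun k : ℕ => (bernoulli k : ℂ) * x ^ k / (Nat.factorial k : ℂ))
      (x / (Complex.exp x - 1)) := by
  have hπ : (0 : ℝ) < π := Real.pi_pos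
  set a : ℕ → ℂ := fun k => (bernoulli k : ℂ) * x ^ k / (Nat.factorial k : ℂ) with ha_def
  have hr1 : ‖x‖ / (2 * π) < 1 := by rw [div_lt_one (by positivity)]; exact hx
  have hr0 : 0 ≤ ‖x‖ / (2 * π) := by positivity
  have hnorm : ∀ k, ‖a k‖ ≤ 4 * (‖x‖ / (2 * π)) ^ k := by
    intro k
    have : ‖a k‖ = |(bernoulli k : ℝ)| * ‖x‖ ^ k / k.factorial := by
      rw [ha_def]
      rw [norm_div, norm_mul, norm_pow, Complex.norm_natCast, Complex.norm_ratCast]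
    rw [this, div_pow]
    calc |(bernoulli k : ℝ)| * ‖x‖ ^ k / k.factorial
        = (|(bernoulli k : ℝ)| / k.factorial) * ‖x‖ ^ k := by ring
      _ ≤ (4 / (2 * π) ^ k) * ‖x‖ ^ k :=
          mul_le_mul_of_nonneg_right (bernoulli_abs_bound k) (by positivity)
      _ = 4 * (‖x‖ ^ k / (2 * π) ^ k) := by ring
  have hsa : Summable fun k => ‖a k‖ :=
    Summable.of_nonneg_of_le (fun _ => norm_nonneg _) hnorm
      ((summable_geometric_of_lt_one hr0 hr1).mul_left 4)
  have ha : Summable a := hsa.of_norm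
  have hexp : HasSum (fun k : ℕ => x ^ k / (Nat.factorial k : ℂ)) (Complex.exp x) := by
    rw [Complex.exp_eq_exp_ℂ]
    exact NormedSpace.expSeries_div_hasSum_exp x
  set b : ℕ → ℂ := Function.update (fun k : ℕ => x ^ k / (Nat.factorial k : ℂ)) 0 0 with hb_def
  have hb : HasSum b (Complex.exp x - 1) := by
    have h := hexp.update 0 0
    rw [hb_def]
    simpa [sub_eq_neg_add] using h
  have hsb : Summable fun k => ‖b k‖ := by
    refine Summable.of_nonneg_of_le (fun _ => norm_nonneg _) (fun k => ?_)
      (Real.summable_pow_div_factorial ‖x‖)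
    rcases eq_or_ne k 0 with rfl | hk
    · simp [hb_def]
    · rw [hb_def, Function.update_of_ne hk, norm_div, norm_pow, Complex.norm_natCast]
  have hexp1 : Complex.exp x ≠ 1 := by
    intro h
    rw [Complex.exp_eq_one_iff] at h
    obtain ⟨n, hn⟩ := h
    have hnz : n ≠ 0 := by
      intro h0
      rw [h0] at hn
      simp at hn
      exact hx0 hn
    have hxn : ‖x‖ = |(n : ℝ)| * (2 * π) := by
      rw [hn, norm_mul]
      congr 1
      · exact Complex.norm_intCast n
      · rw [norm_mul, norm_mul, Complex.norm_I, mul_one, Complex.norm_ofNat,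
          Complex.norm_real, Real.norm_eq_abs, abs_of_pos hπ]
    have h1 : (1 : ℝ) ≤ |(n : ℝ)| := by
      rw [← Int.cast_abs]
      exact_mod_cast Int.one_le_abs (by omega)
    nlinarith
  have hne : Complex.exp x - 1 ≠ 0 := sub_ne_zero.mpr hexp1
  have hc : ∀ n : ℕ, (∑ kl ∈ Finset.HasAntidiagonal.antidiagonal n, a kl.1 * b kl.2)
      = if n = 1 then x else 0 := by
    intro n
    rw [Finset.Nat.sum_antidiagonal_eq_sum_range_succ_mk, Finset.sum_range_succ]
    have hb0 : b (n - n) = 0 := by rw [Nat.sub_self]; simp [hb_def]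
    rw [hb0, mul_zero, add_zero]
    have hterm : ∀ i ∈ Finset.range n,
        a i * b (n - i) = ((n.choose i : ℂ) * (bernoulli i : ℂ)) * (x ^ n / (n.factorial : ℂ)) := by
      intro i hi
      rw [Finset.mem_range] at hi
      rw [hb_def, Function.update_of_ne (by omega), ha_def]
      have hch : ((n.choose i : ℕ) : ℂ) * (Nat.factorial i : ℂ) * (Nat.factorial (n - i) : ℂ)
          = (Nat.factorial n : ℂ) := by
        exact_mod_cast congrArg (Nat.cast : ℕ → ℂ) (Nat.choose_mul_factorial_mul_factorial hi.le)
      have hxn : x ^ i * x ^ (n - i) = x ^ n := by rw [← pow_add]; congr 1; omega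
      have hfi : (Nat.factorial i : ℂ) ≠ 0 := by exact_mod_cast i.factorial_ne_zero
      have hfni : (Nat.factorial (n - i) : ℂ) ≠ 0 := by exact_mod_cast (n - i).factorial_ne_zero
      have hfn : (Nat.factorial n : ℂ) ≠ 0 := by exact_mod_cast n.factorial_ne_zero
      field_simp
      linear_combination (bernoulli i : ℂ) * x ^ i * x ^ (n - i) * hch.symm +
        (bernoulli i : ℂ) * (Nat.factorial i : ℂ) * (Nat.factorial (n - i) : ℂ) *
          (n.choose i : ℂ) * hxn
    rw [Finset.sum_congr rfl hterm, ← Finset.sum_mul]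
    have hsC : (∑ i ∈ Finset.range n, (n.choose i : ℂ) * (bernoulli i : ℂ))
        = if n = 1 then 1 else 0 := by
      have h := congrArg (Rat.cast : ℚ → ℂ) (sum_bernoulli n)
      push_cast at h
      rcases eq_or_ne n 1 with rfl | hn1
      · simpa using h
      · simp only [hn1, if_false] at h ⊢
        exact_mod_cast h
    rw [hsC]
    rcases eq_or_ne n 1 with rfl | hn1
    · norm_num [Nat.factorial]
    · simp [hn1]
  have hmul := tsum_mul_tsum_eq_tsum_sum_antidiagonal_of_summable_norm hsa hsb
  rw [hb.tsum_eq] at hmul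
  have htsum : (∑' n : ℕ, ∑ kl ∈ Finset.HasAntidiagonal.antidiagonal n, a kl.1 * b kl.2) = x := by
    rw [tsum_congr hc]
    exact tsum_ite_eq 1 (fun _ => x)
  rw [htsum] at hmul
  have : (∑' n, a n) = x / (Complex.exp x - 1) := by
    rw [eq_div_iff hne]
    exact hmul
  exact this ▸ ha.hasSum

theorem z_mul_cot_series (z : ℂ) (hz : ‖z‖ < Real.pi) (hz0 : z ≠ 0) :
    HasSum
      (fun k : ℕ => (bernoulli (2 * k) : ℂ) * (-1) ^ k * 2 ^ (2 * k) * z ^ (2 * k)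
        / (Nat.factorial (2 * k) : ℂ))
      (z * Complex.cot z) := by
  have hπ := Real.pi_pos
  set x : ℂ := 2 * I * z with hx_def
  have hx : ‖x‖ < 2 * π := by
    rw [hx_def]
    rw [norm_mul, norm_mul, Complex.norm_I]
    simp only [Complex.norm_ofNat]
    nlinarith [norm_nonneg z]
  have hx0 : x ≠ 0 := by
    rw [hx_def]
    simp [I_ne_zero, hz0]
  have h1 := bernoulli_egf_hasSum x hx hx0
  set a : ℕ → ℂ := fun k => (bernoulli k : ℂ) * x ^ k / (Nat.factorial k : ℂ) with ha_def
  have h2 := h1.update 1 0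
  have ha1 : a 1 = -(I * z) := by
    rw [ha_def]
    simp [bernoulli_one, hx_def, Nat.factorial]
    push_cast
    ring
  have hexp1 : Complex.exp x ≠ 1 := by
    intro h
    rw [Complex.exp_eq_one_iff] at h
    obtain ⟨n, hn⟩ := h
    have hnz : n ≠ 0 := by
      intro h0
      rw [h0] at hn
      simp at hn
      exact hx0 hn
    have hxn : ‖x‖ = |(n : ℝ)| * (2 * π) := by
      rw [hn, norm_mul]
      congr 1
      · exact Complex.norm_intCast n
      · rw [norm_mul, norm_mul, Complex.norm_I, mul_one, Complex.norm_ofNat,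
          Complex.norm_real, Real.norm_eq_abs, abs_of_pos hπ]
    have h1 : (1 : ℝ) ≤ |(n : ℝ)| := by
      rw [← Int.cast_abs]
      exact_mod_cast Int.one_le_abs (by omega)
    nlinarith
  have hne : Complex.exp x - 1 ≠ 0 := sub_ne_zero.mpr hexp1
  have hsum_eq : 0 - a 1 + x / (Complex.exp x - 1) = z * Complex.cot z := by
    rw [ha1, Complex.cot_eq_exp_ratio, hx_def]
    have hne2 : 1 - Complex.exp (2 * I * z) ≠ 0 := by
      intro h
      apply hne
      rw [hx_def]
      rw [sub_eq_zero] at h ⊢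
      exact h.symm
    rw [← hx_def] at hne2 ⊢
    field_simp
    rw [hx_def]
    ring_nf
    rw [Complex.I_sq]
    ring
  rw [hsum_eq] at h2
  have hinj : Function.Injective (fun k : ℕ => 2 * k) := by
    intro a b h
    simp only at h
    omega
  have hvanish : ∀ m, m ∉ Set.range (fun k : ℕ => 2 * k) → Function.update a 1 0 m = 0 := by
    intro m hm
    simp only [Set.mem_range, not_exists] at hm
    have hodd : Odd m := by
      rcases Nat.even_or_odd m with ⟨k, hk⟩ | h
      · exact absurd (by omega : 2 * k = m) (hm k)
      · exact h
    rcases eq_or_ne m 1 with rfl | hm1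
    · simp
    · rw [Function.update_of_ne hm1, ha_def]
      have hb0 : bernoulli m = 0 := bernoulli_odd_zero hodd (by
        rcases hodd with ⟨k, hk⟩; omega)
      simp [hb0]
  have h3 : HasSum ((Function.update a 1 0) ∘ fun k : ℕ => 2 * k) (z * Complex.cot z) :=
    (hinj.hasSum_iff hvanish).mpr h2
  convert h3 using 1
  funext k
  simp only [Function.comp_apply]
  rw [Function.update_of_ne (show 2 * k ≠ 1 by omega)]
  have hxk : x ^ (2 * k) = (-1) ^ k * 2 ^ (2 * k) * z ^ (2 * k) := by
    rw [hx_def, mul_pow, mul_pow, pow_mul I, Complex.I_sq]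
    ring
  show _ = (bernoulli (2 * k) : ℂ) * x ^ (2 * k) / ((2 * k).factorial : ℂ)
  rw [hxk]
  ring
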